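/- Let a, b, c > 0 with c < min(a,b). Then there exists a unique α < 0 such that c^α = a^α + b^α. -/

import Mathlib

open Real Filter

theorem power_additivity_unique_neg (a b c : ℝ)
    (ha : 0 < a) (hb : 0 < b) (hc : 0 < c) (h : c < min a b) :
    ∃! α : ℝ, α < 0 ∧ c ^ α = a ^ α + b ^ α := by
  obtain ⟨hca, hcb⟩ := lt_min_iff.mp h
  set p := a / c with hp
  set q := b / c with hq
  have hp1 : 1 < p := (one_lt_div hc).mpr hca
  have hq1 : 1 < q := (one_lt_div hc).mpr hcb
  have hpp : (0:ℝ) < p := lt_trans one_pos hp1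
  have hqp : (0:ℝ) < q := lt_trans one_pos hq1
  set f : ℝ → ℝ := fun α => p ^ α + q ^ α with hf
  have hmono : StrictMono f := fun x y hxy =>
    add_lt_add ((Real.rpow_lt_rpow_left_iff hp1).mpr hxy)
      ((Real.rpow_lt_rpow_left_iff hq1).mpr hxy)
  have hcont : Continuous f :=
    Continuous.add
      (continuous_iff_continuousAt.mpr fun x => Real.continuousAt_const_rpow hpp.ne')
      (continuous_iff_continuousAt.mpr fun x => Real.continuousAt_const_rpow hqp.ne')
  have key : ∀ α : ℝ, (c ^ α = a ^ α + b ^ α) ↔ f α = 1 := by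
    intro α
    have hcα : (0:ℝ) < c ^ α := Real.rpow_pos_of_pos hc α
    simp only [hf, hp, hq, Real.div_rpow ha.le hc.le, Real.div_rpow hb.le hc.le]
    rw [← add_div, div_eq_one_iff_eq hcα.ne']
    exact eq_comm
  have htend : Tendsto f atBot (nhds 0) := by
    have h1 : Tendsto (fun α : ℝ => p ^ α) atBot (nhds 0) := by
      have : Tendsto (fun α : ℝ => Real.exp (Real.log p * α)) atBot (nhds 0) :=
        Real.tendsto_exp_atBot.comp (tendsto_id.const_mul_atBot (Real.log_pos hp1))
      exact this.congr fun α => (Real.rpow_def_of_pos hpp α).symm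
    have h2 : Tendsto (fun α : ℝ => q ^ α) atBot (nhds 0) := by
      have : Tendsto (fun α : ℝ => Real.exp (Real.log q * α)) atBot (nhds 0) :=
        Real.tendsto_exp_atBot.comp (tendsto_id.const_mul_atBot (Real.log_pos hq1))
      exact this.congr fun α => (Real.rpow_def_of_pos hqp α).symm
    simpa using h1.add h2
  obtain ⟨α₀, hα₀neg, hα₀lt⟩ :=
    ((eventually_lt_atBot (0:ℝ)).and (htend.eventually_lt_const one_pos)).exists
  have hf0 : f 0 = 2 := by simp [hf]; norm_num
  have hsub := intermediate_value_Icc hα₀neg.le hcont.continuousOn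
  have h1mem : (1:ℝ) ∈ Set.Icc (f α₀) (f 0) := ⟨hα₀lt.le, by rw [hf0]; norm_num⟩
  obtain ⟨α, hαmem, hαeq⟩ := hsub h1mem
  have hαneg : α < 0 := by
    rcases lt_or_eq_of_le hαmem.2 with h' | h'
    · exact h'
    · exfalso; rw [h', hf0] at hαeq; norm_num at hαeq
  refine ⟨α, ⟨hαneg, (key α).mpr hαeq⟩, ?_⟩
  rintro y ⟨hyneg, hyeq⟩
  exact hmono.injective (((key y).mp hyeq).trans hαeq.symm)
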